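/- Let A be a ring and T an A-module of projective dimension at most n admitting an exact sequence 0 → A → T⁰ → T¹ → ⋯ → Tⁿ → 0 with each Tⁱ a direct summand of a finite direct sum of copies of T. Then in the derived category D(A), the complex A (in degree 0) belongs to the smallest thick triangulated subcategory containing T. -/

import Mathlib

open CategoryTheory Limits Pretriangulated DerivedCategory

universe u

/-- A class of objects of a pretriangulated category is thick triangulated if it
is stable under shifts, cones, and direct summands (retracts). -/
def IsThickTriangulatedClass {T : Type*} [Category T] [HasZeroObject T] [Preadditive T]
    [HasShift T ℤ] [∀ n : ℤ, (shiftFunctor T n).Additive] [Pretriangulated T]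
    (P : Set T) : Prop :=
  (∀ (X : T) (n : ℤ), X ∈ P → (X⟦n⟧ : T) ∈ P) ∧
  (∀ Tr : Triangle T, Tr ∈ (distTriang T) → Tr.obj₁ ∈ P → Tr.obj₂ ∈ P → Tr.obj₃ ∈ P) ∧
  (∀ X Y : T, Y ∈ P → (∃ (r : X ⟶ Y) (s : Y ⟶ X), r ≫ s = 𝟙 X) → X ∈ P)

/-- Membership in the smallest thick triangulated subcategory containing `S`. -/
def memThickClosure {T : Type*} [Category T] [HasZeroObject T] [Preadditive T]
    [HasShift T ℤ] [∀ n : ℤ, (shiftFunctor T n).Additive] [Pretriangulated T]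
    (S : Set T) (X : T) : Prop :=
  ∀ P : Set T, IsThickTriangulatedClass P → S ⊆ P → X ∈ P

/-- Let `A` be a ring and `T` an `A`-module of projective dimension at most `n`
(expressed by the vanishing of `Ext^i(T, M) = Hom_{D(A)}(T, M[i])` for `i > n`)
which admits an exact sequence `0 → A → T⁰ → ⋯ → Tⁿ → 0` with each `Tⁱ` a
direct summand of a finite direct sum of copies of `T`. Then, in the derived
category `D(A)`, the module `A` belongs to the smallest thick triangulated
subcategory containing `T`. -/
theorem mem_thickClosure_of_good_tilting_sequence
    (A : Type u) [Ring A] [HasDerivedCategory (ModuleCat.{u} A)]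
    (n : ℕ) (T : ModuleCat.{u} A)
    (hpd : ∀ (M : ModuleCat.{u} A) (i : ℤ), (n : ℤ) < i →
      ∀ g : (singleFunctor (ModuleCat.{u} A) 0).obj T ⟶
        (((singleFunctor (ModuleCat.{u} A) 0).obj M)⟦i⟧), g = 0)
    (hseq : ∃ (P : ℕ → ModuleCat.{u} A) (ι : ModuleCat.of A A ⟶ P 0)
        (δ : ∀ i : ℕ, P i ⟶ P (i + 1)),
      Function.Injective ι ∧
      Function.Exact ι (δ 0) ∧
      (∀ i : ℕ, Function.Exact (δ i) (δ (i + 1))) ∧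
      (∀ i : ℕ, n < i → IsZero (P i)) ∧
      (∀ i : ℕ, i ≤ n → ∃ (m : ℕ) (s : P i ⟶ ModuleCat.of A (Fin m → T))
          (r : ModuleCat.of A (Fin m → T) ⟶ P i), s ≫ r = 𝟙 (P i))) :
    memThickClosure {(singleFunctor (ModuleCat.{u} A) 0).obj T}
      ((singleFunctor (ModuleCat.{u} A) 0).obj (ModuleCat.of A A)) := by
  clear hpd
  intro P hP hsub
  obtain ⟨hshift, hcone, hretract⟩ := hP
  set F := singleFunctor (ModuleCat.{u} A) 0 with hF
  have hT : F.obj T ∈ P := hsub rfl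
  -- closure under isomorphism
  have hiso : ∀ {X Y : DerivedCategory (ModuleCat.{u} A)}, (X ≅ Y) → Y ∈ P → X ∈ P := by
    intro X Y e hY
    exact hretract X Y hY ⟨e.hom, e.inv, e.hom_inv_id⟩
  -- zero objects belong to P
  have hzero : ∀ X : DerivedCategory (ModuleCat.{u} A), IsZero X → X ∈ P := by
    intro X hX
    exact hretract X (F.obj T) hT ⟨0, 0, by rw [zero_comp]; exact (hX.eq_of_src _ _)⟩
  -- shifting down
  have hunshift : ∀ X : DerivedCategory (ModuleCat.{u} A), (X⟦(1 : ℤ)⟧) ∈ P → X ∈ P := by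
    intro X hX
    exact hiso ((shiftFunctorCompIsoId (DerivedCategory (ModuleCat.{u} A)) (1 : ℤ) (-1)
      (by omega)).symm.app X) (hshift _ (-1) hX)
  -- two-out-of-three for short exact sequences of modules
  have hses₁ : ∀ (S : ShortComplex (ModuleCat.{u} A)) (hS : S.ShortExact),
      F.obj S.X₂ ∈ P → F.obj S.X₃ ∈ P → F.obj S.X₁ ∈ P := by
    intro S hS h2 h3
    refine hunshift _ ?_
    exact hcone hS.singleTriangle.rotate
      (rot_of_distTriang _ hS.singleTriangle_distinguished) h2 h3
  have hses₂ : ∀ (S : ShortComplex (ModuleCat.{u} A)) (hS : S.ShortExact),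
      F.obj S.X₁ ∈ P → F.obj S.X₃ ∈ P → F.obj S.X₂ ∈ P := by
    intro S hS h1 h3
    exact hcone hS.singleTriangle.invRotate
      (inv_rot_of_distTriang _ hS.singleTriangle_distinguished) (hshift _ (-1) h3) h1
  obtain ⟨Q, ι, δ, hι, hexact0, hexact, hzeroQ, hsummand⟩ := hseq
  -- the finite direct sums of copies of T belong to P
  have hFin : ∀ m : ℕ, F.obj (ModuleCat.of A (Fin m → T)) ∈ P := by
    intro m
    induction m with
    | zero =>
        refine hzero _ (F.map_isZero ?_)
        exact ModuleCat.isZero_of_subsingleton _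
    | succ m ih =>
        let S : ShortComplex (ModuleCat.{u} A) := ShortComplex.mk
          (ModuleCat.ofHom (LinearMap.single A (fun _ : Fin (m + 1) => ↥T) 0) :
            T ⟶ ModuleCat.of A (Fin (m + 1) → T))
          (ModuleCat.ofHom (LinearMap.funLeft A ↥T Fin.succ) :
            ModuleCat.of A (Fin (m + 1) → T) ⟶ ModuleCat.of A (Fin m → T))
          (by
            ext x j
            show Pi.single (M := fun _ : Fin (m + 1) => ↥T) (0 : Fin (m + 1)) x (Fin.succ j) = 0
            exact Pi.single_eq_of_ne (Fin.succ_ne_zero j) x)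
        have hSse : S.ShortExact := by
          refine ShortComplex.ShortExact.mk' ?_ ?_ ?_
          · rw [ShortComplex.moduleCat_exact_iff]
            intro x₂ hx₂
            refine ⟨x₂ 0, funext fun j => ?_⟩
            refine Fin.cases ?_ (fun k => ?_) j
            · show Pi.single (M := fun _ : Fin (m + 1) => ↥T) (0 : Fin (m + 1)) (x₂ 0) 0 = x₂ 0
              exact Pi.single_eq_same (M := fun _ : Fin (m + 1) => ↥T) 0 (x₂ 0)
            · have h0 : x₂ k.succ = 0 := congrFun hx₂ k
              show Pi.single (M := fun _ : Fin (m + 1) => ↥T) (0 : Fin (m + 1)) (x₂ 0) k.succ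
                = x₂ k.succ
              rw [h0]
              exact Pi.single_eq_of_ne (Fin.succ_ne_zero k) (x₂ 0)
          · rw [ModuleCat.mono_iff_injective]
            exact Pi.single_injective (M := fun _ : Fin (m + 1) => ↥T) 0
          · rw [ModuleCat.epi_iff_surjective]
            show Function.Surjective (LinearMap.funLeft A ↥T (Fin.succ : Fin m → Fin (m + 1)))
            intro w
            refine ⟨Fin.cons 0 w, funext fun j => ?_⟩
            show Fin.cons (α := fun _ : Fin (m + 1) => ↥T) 0 w j.succ = w j
            exact Fin.cons_succ (α := fun _ : Fin (m + 1) => ↥T) 0 w j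
        exact hses₂ S hSse hT ih
  -- the modules in the exact sequence belong to P
  have hQmem : ∀ i : ℕ, F.obj (Q i) ∈ P := by
    intro i
    rcases le_or_gt i n with hi | hi
    · obtain ⟨m, s, r, hsr⟩ := hsummand i hi
      exact hretract _ _ (hFin m) ⟨F.map s, F.map r,
        by rw [← F.map_comp, hsr, F.map_id]⟩
    · exact hzero _ (F.map_isZero (hzeroQ i hi))
  -- the kernels
  have hses : ∀ i : ℕ, F.obj (ModuleCat.of A ↥(LinearMap.ker (δ (i + 1)).hom)) ∈ P →
      F.obj (ModuleCat.of A ↥(LinearMap.ker (δ i).hom)) ∈ P := by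
    intro i hnext
    let S : ShortComplex (ModuleCat.{u} A) := ShortComplex.mk
      (ModuleCat.ofHom ((LinearMap.ker (δ i).hom).subtype) :
        ModuleCat.of A ↥(LinearMap.ker (δ i).hom) ⟶ Q i)
      (ModuleCat.ofHom (LinearMap.codRestrict (LinearMap.ker (δ (i + 1)).hom) (δ i).hom
          (fun x => (hexact i).apply_apply_eq_zero x)) :
        Q i ⟶ ModuleCat.of A ↥(LinearMap.ker (δ (i + 1)).hom))
      (by
        ext x
        exact x.2)
    have hSse : S.ShortExact := by
      refine ShortComplex.ShortExact.mk' ?_ ?_ ?_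
      · rw [ShortComplex.moduleCat_exact_iff]
        intro x₂ hx₂
        have hx₂' : δ i x₂ = 0 := congrArg Subtype.val hx₂
        exact ⟨⟨x₂, hx₂'⟩, rfl⟩
      · rw [ModuleCat.mono_iff_injective]
        exact Subtype.val_injective
      · rw [ModuleCat.epi_iff_surjective]
        rintro ⟨y, hy⟩
        obtain ⟨x, hx⟩ := (hexact i y).mp hy
        exact ⟨x, Subtype.ext hx⟩
    exact hses₁ S hSse (hQmem i) hnext
  have hKzero : F.obj (ModuleCat.of A ↥(LinearMap.ker (δ (n + 1)).hom)) ∈ P := by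
    refine hzero _ (F.map_isZero ?_)
    have h := hzeroQ (n + 1) (by omega)
    have hid : (𝟙 (Q (n + 1)) : Q (n + 1) ⟶ Q (n + 1)) = 0 := h.eq_of_src _ _
    have hsub' : Subsingleton ↥(Q (n + 1)) :=
      ⟨fun x y => by
        have hx : x = 0 := congrArg (fun f : Q (n + 1) ⟶ Q (n + 1) => f x) hid
        have hy : y = 0 := congrArg (fun f : Q (n + 1) ⟶ Q (n + 1) => f y) hid
        rw [hx, hy]⟩
    have hsub'' : Subsingleton ↥(LinearMap.ker (δ (n + 1)).hom) := ⟨fun a b => Subtype.ext (@Subsingleton.elim _ hsub' _ _)⟩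
    exact @ModuleCat.isZero_of_subsingleton A _ (ModuleCat.of A ↥(LinearMap.ker (δ (n + 1)).hom)) hsub''
  have hKmem : ∀ d : ℕ, F.obj (ModuleCat.of A ↥(LinearMap.ker (δ (n + 1 - d)).hom)) ∈ P := by
    intro d
    induction d with
    | zero => simpa using hKzero
    | succ d ih =>
        rcases le_or_gt (d + 1) (n + 1) with hd | hd
        · have h1 : n + 1 - d = (n + 1 - (d + 1)) + 1 := by omega
          exact hses _ (by rw [← h1]; exact ih)
        · have h1 : n + 1 - d = n + 1 - (d + 1) := by omega
          rw [← h1]; exact ih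
  have hK0 : F.obj (ModuleCat.of A ↥(LinearMap.ker (δ 0).hom)) ∈ P := by
    have h := hKmem (n + 1)
    rwa [Nat.sub_self] at h
  -- A ≅ K 0
  have hker : LinearMap.ker (δ 0).hom = LinearMap.range ι.hom := by
    rw [← LinearMap.exact_iff]
    exact hexact0
  let e : ModuleCat.of A A ≃ₗ[A] ↥(LinearMap.ker (δ 0).hom) :=
    (LinearEquiv.ofInjective ι.hom hι).trans (LinearEquiv.ofEq _ _ hker.symm)
  exact hiso (F.mapIso e.toModuleIso) hK0
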